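/- Let a_{qi}, a_{pj} ≥ 0 with (1/N)Σ_{j=1}^N a_{pj} = 1 and (1/N)Σ_{i=1}^N a_{qi} = 1, and let v_1,...,v_N, v_p', v_q' ∈ ℝ^d with |v_j − v_i| ≤ D for all i,j and |v_p' − v_q'| ≤ D. If (1/N²) Σ_{i,j=1}^N min(a_{qi} a_{pj}, a_{qj} a_{pi}) ≥ ψ*, then |(1/N²) Σ_{i,j=1}^N a_{qi} a_{pj} ⟨v_j − v_i, v_p' − v_q'⟩| ≤ (1 − ψ*) D². -/

import Mathlib

open scoped BigOperators
open Finset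

theorem nonsymmetric_interaction_estimate (N d : ℕ) (hN : 1 ≤ N) (hd : 1 ≤ d)
    (aq ap : Fin N → ℝ)
    (haq : ∀ i, 0 ≤ aq i) (hap : ∀ j, 0 ≤ ap j)
    (hap1 : (1 / (N : ℝ)) * ∑ j, ap j = 1) (haq1 : (1 / (N : ℝ)) * ∑ i, aq i = 1)
    (v : Fin N → EuclideanSpace ℝ (Fin d)) (vp vq : EuclideanSpace ℝ (Fin d))
    (D ψs : ℝ) (hD : 0 ≤ D) (hψs : 0 < ψs)
    (hv : ∀ i j, ‖v j - v i‖ ≤ D) (hpq : ‖vp - vq‖ ≤ D)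
    (hstruct : (1 / (N : ℝ) ^ 2) * ∑ i, ∑ j, min (aq i * ap j) (aq j * ap i) ≥ ψs) :
    |(1 / (N : ℝ) ^ 2) * ∑ i, ∑ j, aq i * ap j * (inner ℝ (v j - v i) (vp - vq) : ℝ)|
      ≤ (1 - ψs) * D ^ 2 := by
  have hN0 : (0:ℝ) < N := by exact_mod_cast hN
  have hN2 : (0:ℝ) < (N:ℝ)^2 := by positivity
  set w := vp - vq with hw
  have hap' : ∑ j, ap j = N := by
    field_simp at hap1; linarith
  have haq' : ∑ i, aq i = N := by
    field_simp at haq1; linarith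
  have hinner : ∀ i j, |(inner ℝ (v j - v i) w : ℝ)| ≤ D ^ 2 := by
    intro i j
    calc |(inner ℝ (v j - v i) w : ℝ)| ≤ ‖v j - v i‖ * ‖w‖ := abs_real_inner_le_norm _ _
      _ ≤ D * D := mul_le_mul (hv i j) hpq (norm_nonneg _) hD
      _ = D ^ 2 := (sq D).symm
  have hr : ∀ i j : Fin N, 0 ≤ aq i * ap j - min (aq i * ap j) (aq j * ap i) :=
    fun i j => sub_nonneg.mpr (min_le_left _ _)
  -- the symmetric part vanishes
  set S := ∑ i, ∑ j, min (aq i * ap j) (aq j * ap i) * (inner ℝ (v j - v i) w : ℝ) with hS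
  have hsym : S = 0 := by
    have h1 : S = ∑ j, ∑ i, min (aq i * ap j) (aq j * ap i) * (inner ℝ (v j - v i) w : ℝ) :=
      Finset.sum_comm
    have h2 : (∑ j, ∑ i, min (aq i * ap j) (aq j * ap i) * (inner ℝ (v j - v i) w : ℝ)) = -S := by
      rw [hS, ← Finset.sum_neg_distrib]
      refine Finset.sum_congr rfl fun j _ => ?_
      rw [← Finset.sum_neg_distrib]
      refine Finset.sum_congr rfl fun i _ => ?_
      rw [min_comm, show v j - v i = -(v i - v j) by abel, inner_neg_left]
      ring
    have : S = -S := h1.trans h2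
    linarith
  -- mass bounds
  have hmass : ∑ i, ∑ j, (aq i * ap j - min (aq i * ap j) (aq j * ap i))
      ≤ (1 - ψs) * (N:ℝ)^2 := by
    have h1 : ∑ i, ∑ j, aq i * ap j = (N:ℝ)^2 := by
      rw [← Finset.sum_mul_sum, haq', hap']; ring
    have h2 : ψs * (N:ℝ)^2 ≤ ∑ i, ∑ j, min (aq i * ap j) (aq j * ap i) := by
      have := mul_le_mul_of_nonneg_left hstruct (le_of_lt hN2)
      rw [← mul_assoc] at this
      field_simp at this
      nlinarith [this]
    have h3 : ∑ i, ∑ j, (aq i * ap j - min (aq i * ap j) (aq j * ap i))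
        = (∑ i, ∑ j, aq i * ap j) - ∑ i, ∑ j, min (aq i * ap j) (aq j * ap i) := by
      rw [← Finset.sum_sub_distrib]
      exact Finset.sum_congr rfl fun i _ => Finset.sum_sub_distrib _ _
    rw [h3, h1]; linarith
  -- rewrite the main sum
  have hsplit : ∑ i, ∑ j, aq i * ap j * (inner ℝ (v j - v i) w : ℝ)
      = ∑ i, ∑ j, (aq i * ap j - min (aq i * ap j) (aq j * ap i)) * (inner ℝ (v j - v i) w : ℝ) := by
    have : ∑ i, ∑ j, aq i * ap j * (inner ℝ (v j - v i) w : ℝ)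
        = (∑ i, ∑ j, (aq i * ap j - min (aq i * ap j) (aq j * ap i)) * (inner ℝ (v j - v i) w : ℝ))
          + S := by
      rw [hS, ← Finset.sum_add_distrib]
      refine Finset.sum_congr rfl fun i _ => ?_
      rw [← Finset.sum_add_distrib]
      refine Finset.sum_congr rfl fun j _ => by ring
    rw [this, hsym, add_zero]
  have hbound : |∑ i, ∑ j, (aq i * ap j - min (aq i * ap j) (aq j * ap i)) *
      (inner ℝ (v j - v i) w : ℝ)| ≤ (1 - ψs) * (N:ℝ)^2 * D ^ 2 := by
    calc |∑ i, ∑ j, (aq i * ap j - min (aq i * ap j) (aq j * ap i)) * (inner ℝ (v j - v i) w : ℝ)|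
        ≤ ∑ i, ∑ j, |(aq i * ap j - min (aq i * ap j) (aq j * ap i)) * (inner ℝ (v j - v i) w : ℝ)| := by
          refine (Finset.abs_sum_le_sum_abs _ _).trans ?_
          exact Finset.sum_le_sum fun i _ => Finset.abs_sum_le_sum_abs _ _
      _ ≤ ∑ i, ∑ j, (aq i * ap j - min (aq i * ap j) (aq j * ap i)) * D ^ 2 := by
          refine Finset.sum_le_sum fun i _ => Finset.sum_le_sum fun j _ => ?_
          rw [abs_mul, abs_of_nonneg (hr i j)]
          exact mul_le_mul_of_nonneg_left (hinner i j) (hr i j)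
      _ = (∑ i, ∑ j, (aq i * ap j - min (aq i * ap j) (aq j * ap i))) * D ^ 2 := by
          rw [Finset.sum_mul]
          exact Finset.sum_congr rfl fun i _ => (Finset.sum_mul _ _ _).symm
      _ ≤ (1 - ψs) * (N:ℝ)^2 * D ^ 2 := by
          exact mul_le_mul_of_nonneg_right hmass (by positivity)
  rw [hsplit, abs_mul, abs_of_pos (by positivity : (0:ℝ) < 1 / (N:ℝ)^2)]
  calc 1 / (N:ℝ)^2 * |∑ i, ∑ j, (aq i * ap j - min (aq i * ap j) (aq j * ap i)) *
        (inner ℝ (v j - v i) w : ℝ)|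
      ≤ 1 / (N:ℝ)^2 * ((1 - ψs) * (N:ℝ)^2 * D ^ 2) :=
        mul_le_mul_of_nonneg_left hbound (by positivity)
    _ = (1 - ψs) * D ^ 2 := by field_simp
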